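/- For the product of two pseudometric spaces (X₁,d₁), (X₂,d₂) with the max-metric d_∞((x₁,x₂),(y₁,y₂)) = max(d₁(x₁,y₁), d₂(x₂,y₂)), and for nonexpansive f₁ : (X₁,d₁) → ([0,⊤],d_e), f₂ : (X₂,d₂) → ([0,⊤],d_e), the function (x₁,x₂) ↦ max(f₁(x₁), f₂(x₂)) is nonexpansive from (X₁×X₂, d_∞) to ([0,⊤],d_e); moreover d_∞((x₁,x₂),(y₁,y₂)) is attained as d_e(max(f₁(x₁),f₂(x₂)), max(f₁(y₁),f₂(y₂))) for suitable choices f₁ = d₁(x₁,·) or 0 and f₂ = d₂(x₂,·) or 0. -/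

import Mathlib

open ENNReal

/-- The extended Euclidean distance on `[0,∞]` (restricted to `[0,⊤]`). -/
noncomputable def de (a b : ℝ≥0∞) : ℝ≥0∞ := (a - b) + (b - a)

lemma de_eq_max (a b : ℝ≥0∞) : de a b = max (a - b) (b - a) := by
  rcases le_total a b with h | h
  · simp [de, tsub_eq_zero_of_le h]
  · simp [de, tsub_eq_zero_of_le h]

lemma max_tsub_le (a b c d : ℝ≥0∞) :
    max a c - max b d ≤ max (a - b) (c - d) := by
  rw [tsub_le_iff_right]
  apply max_le
  · exact le_tsub_add.trans (add_le_add (le_max_left _ _) (le_max_left _ _))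
  · exact le_tsub_add.trans (add_le_add (le_max_right _ _) (le_max_right _ _))

lemma de_max_le (a b c d : ℝ≥0∞) :
    de (max a c) (max b d) ≤ max (de a b) (de c d) := by
  rw [de_eq_max, de_eq_max, de_eq_max]
  apply max_le
  · exact (max_tsub_le a b c d).trans
      (max_le_max (le_max_left _ _) (le_max_left _ _))
  · exact (max_tsub_le b a d c).trans
      (max_le_max (le_max_right _ _) (le_max_right _ _))

lemma de_zero (b : ℝ≥0∞) : de 0 b = b := by simp [de, tsub_eq_zero_of_le (zero_le : (0 : ℝ≥0∞) ≤ b)]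

/-- Kantorovich–Rubinstein duality for the product bifunctor with evaluation `max`. -/
theorem stmt14 (T : ℝ≥0∞) (hT : 0 < T) {X₁ X₂ : Type*}
    (d₁ : X₁ → X₁ → ℝ≥0∞) (d₂ : X₂ → X₂ → ℝ≥0∞)
    (h₁refl : ∀ x, d₁ x x = 0) (h₁symm : ∀ x y, d₁ x y = d₁ y x)
    (h₁tri : ∀ x y z, d₁ x z ≤ d₁ x y + d₁ y z) (h₁T : ∀ x y, d₁ x y ≤ T)
    (h₂refl : ∀ x, d₂ x x = 0) (h₂symm : ∀ x y, d₂ x y = d₂ y x)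
    (h₂tri : ∀ x y z, d₂ x z ≤ d₂ x y + d₂ y z) (h₂T : ∀ x y, d₂ x y ≤ T) :
    -- (a) max(f₁, f₂) is nonexpansive w.r.t. the max-metric d_∞
    (∀ (f₁ : X₁ → ℝ≥0∞) (f₂ : X₂ → ℝ≥0∞),
      (∀ x, f₁ x ≤ T) → (∀ x y, de (f₁ x) (f₁ y) ≤ d₁ x y) →
      (∀ x, f₂ x ≤ T) → (∀ x y, de (f₂ x) (f₂ y) ≤ d₂ x y) →
      ∀ (x₁ y₁ : X₁) (x₂ y₂ : X₂),
        de (max (f₁ x₁) (f₂ x₂)) (max (f₁ y₁) (f₂ y₂)) ≤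
          max (d₁ x₁ y₁) (d₂ x₂ y₂)) ∧
    -- (b) the distance d_∞ is attained by suitable nonexpansive functions
    (∀ (x₁ y₁ : X₁) (x₂ y₂ : X₂),
      ∃ (f₁ : X₁ → ℝ≥0∞) (f₂ : X₂ → ℝ≥0∞),
        (∀ x, f₁ x ≤ T) ∧ (∀ x y, de (f₁ x) (f₁ y) ≤ d₁ x y) ∧
        (∀ x, f₂ x ≤ T) ∧ (∀ x y, de (f₂ x) (f₂ y) ≤ d₂ x y) ∧
        de (max (f₁ x₁) (f₂ x₂)) (max (f₁ y₁) (f₂ y₂)) =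
          max (d₁ x₁ y₁) (d₂ x₂ y₂)) := by
  constructor
  · intro f₁ f₂ _ hf₁ _ hf₂ x₁ y₁ x₂ y₂
    exact (de_max_le _ _ _ _).trans (max_le_max (hf₁ x₁ y₁) (hf₂ x₂ y₂))
  · intro x₁ y₁ x₂ y₂
    have nonexp₁ : ∀ x y, de (d₁ x₁ x) (d₁ x₁ y) ≤ d₁ x y := by
      intro x y
      rw [de_eq_max]
      apply max_le
      · rw [tsub_le_iff_right]
        calc d₁ x₁ x ≤ d₁ x₁ y + d₁ y x := h₁tri _ _ _
          _ = d₁ x y + d₁ x₁ y := by rw [h₁symm y x, add_comm]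
      · rw [tsub_le_iff_right]
        calc d₁ x₁ y ≤ d₁ x₁ x + d₁ x y := h₁tri _ _ _
          _ = d₁ x y + d₁ x₁ x := add_comm _ _
    have nonexp₂ : ∀ x y, de (d₂ x₂ x) (d₂ x₂ y) ≤ d₂ x y := by
      intro x y
      rw [de_eq_max]
      apply max_le
      · rw [tsub_le_iff_right]
        calc d₂ x₂ x ≤ d₂ x₂ y + d₂ y x := h₂tri _ _ _
          _ = d₂ x y + d₂ x₂ y := by rw [h₂symm y x, add_comm]
      · rw [tsub_le_iff_right]
        calc d₂ x₂ y ≤ d₂ x₂ x + d₂ x y := h₂tri _ _ _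
          _ = d₂ x y + d₂ x₂ x := add_comm _ _
    rcases le_total (d₁ x₁ y₁) (d₂ x₂ y₂) with h | h
    · refine ⟨fun _ => 0, d₂ x₂, fun _ => zero_le, ?_, h₂T x₂, nonexp₂, ?_⟩
      · intro x y; simp [de, h₁refl]
      · simp [h₂refl, de_zero, max_eq_right h]
    · refine ⟨d₁ x₁, fun _ => 0, h₁T x₁, nonexp₁, fun _ => zero_le, ?_, ?_⟩
      · intro x y; simp [de, h₂refl]
      · simp [h₁refl, de_zero, max_eq_left h]
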